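/- arXiv:2505.01669 — 2 statements merged into one kernel-verified Lean document; each statement's English description precedes it below -/
import Mathlib

section
/- Let n ≥ 3 and let X₁, …, Xₙ be vectors in ℝᵖ (or any real inner product space), with sample mean X̄ = n⁻¹ Σᵢ₌₁ⁿ Xᵢ. Then (n−1)⁻¹ Σⱼ₌₁ⁿ ⟨Xⱼ, Xⱼ⟩ − n(n−1)⁻¹ ⟨X̄, X̄⟩ = [n(n−1)(n−2)]⁻¹ Σ_{i,j,k pairwise distinct} ⟨Xᵢ − Xⱼ, Xₖ − Xⱼ⟩, where the last sum ranges over all ordered triples (i,j,k) of pairwise distinct indices in {1,…,n}. -/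
open scoped RealInnerProductSpace

/-- The plug-in estimator of `tr Ξ` based on the sample mean coincides with a third-order
U-statistic: for `n ≥ 3` vectors `X₁, …, Xₙ` in a real inner product space, with sample mean
`X̄ = n⁻¹ ∑ᵢ Xᵢ`,
`(n-1)⁻¹ ∑ⱼ ⟨Xⱼ, Xⱼ⟩ - n (n-1)⁻¹ ⟨X̄, X̄⟩
  = (n(n-1)(n-2))⁻¹ ∑_{i,j,k pairwise distinct} ⟨Xᵢ - Xⱼ, Xₖ - Xⱼ⟩`. -/
theorem sample_trace_estimator_eq_ustatistic
    {E : Type*} [NormedAddCommGroup E] [InnerProductSpace ℝ E]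
    (n : ℕ) (hn : 3 ≤ n) (X : Fin n → E) :
    ((n : ℝ) - 1)⁻¹ * ∑ j, ⟪X j, X j⟫
        - (n : ℝ) * ((n : ℝ) - 1)⁻¹ *
          ⟪(n : ℝ)⁻¹ • ∑ i, X i, (n : ℝ)⁻¹ • ∑ i, X i⟫
      = ((n : ℝ) * ((n : ℝ) - 1) * ((n : ℝ) - 2))⁻¹ *
          ∑ i, ∑ j, ∑ k,
            if i ≠ j ∧ j ≠ k ∧ i ≠ k then ⟪X i - X j, X k - X j⟫ else 0 := by
  have hn' : (3 : ℝ) ≤ (n : ℝ) := by exact_mod_cast hn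
  have h0 : (n : ℝ) ≠ 0 := by linarith
  have h1 : (n : ℝ) - 1 ≠ 0 := by intro h; linarith
  have h2 : (n : ℝ) - 2 ≠ 0 := by intro h; linarith
  set S := ∑ i, X i with hS
  set T := ∑ j, (⟪X j, X j⟫ : ℝ) with hT
  set Q := (⟪S, S⟫ : ℝ) with hQ
  have hP : ∑ i, ∑ k, (⟪X i, X k⟫ : ℝ) = Q := by
    rw [hQ, hS, sum_inner]
    exact Finset.sum_congr rfl fun i _ => (inner_sum _ _ _).symm
  have step : ∀ i j k : Fin n,
      (if i ≠ j ∧ j ≠ k ∧ i ≠ k then (⟪X i - X j, X k - X j⟫ : ℝ) else 0)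
        = ⟪X i - X j, X k - X j⟫
          - (if i = k then (⟪X i - X j, X i - X j⟫ : ℝ) else 0) := by
    intro i j k
    by_cases hij : i = j
    · subst hij; simp
    · by_cases hjk : j = k
      · subst hjk; simp [hij]
      · by_cases hik : i = k
        · subst hik; simp [hij, hjk]
        · simp [hij, hjk, hik]
  have key : (∑ i, ∑ j, ∑ k,
      if i ≠ j ∧ j ≠ k ∧ i ≠ k then (⟪X i - X j, X k - X j⟫ : ℝ) else 0)
      = ((n : ℝ) - 2) * ((n : ℝ) * T - Q) := by
    simp only [step]
    simp only [Finset.sum_sub_distrib, Finset.sum_ite_eq, Finset.mem_univ, if_true]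
    simp only [inner_sub_left, inner_sub_right, Finset.sum_sub_distrib,
      Finset.sum_add_distrib, Finset.sum_const, Finset.card_univ, Fintype.card_fin,
      nsmul_eq_mul, ]
    rw [hP]
    have h3 : ∑ j, ∑ k, (⟪X j, X k⟫ : ℝ) = Q := hP
    have h4 : ∀ j, ∑ i, (⟪X i, X j⟫ : ℝ) = ⟪S, X j⟫ := fun j => (sum_inner _ _ _).symm
    have h5 : ∑ j, (⟪S, X j⟫ : ℝ) = Q := (inner_sum _ _ _).symm
    have h6 : ∑ x : Fin n, ∑ y : Fin n, (⟪X y, X x⟫ : ℝ) = Q := by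
      rw [Finset.sum_comm]; exact hP
    simp only [← Finset.mul_sum, hP, h6, ← hT]
    ring
  rw [key, real_inner_smul_left, real_inner_smul_right, ← hQ]
  field_simp
end

section
/- Let u be a random vector uniformly distributed on the unit sphere S^{p−1} = {x ∈ ℝᵖ : ‖x‖ = 1}, and let A be a fixed p×p real symmetric matrix. Then E[(uᵀ A u)²] = (2‖A‖_F² + (tr A)²)/(p(p+2)), and consequently Var(uᵀ A u) = 2(p‖A‖_F² − (tr A)²)/(p²(p+2)), where ‖A‖_F denotes the Frobenius norm. -/
open MeasureTheory Matrix

set_option linter.unusedSectionVars false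

namespace SphereMomentsAux

variable {p : ℕ} {Ω : Type*} [MeasurableSpace Ω] {P : Measure Ω} [IsProbabilityMeasure P]
  {u : Ω → Fin p → ℝ}

lemma measurable_mulVec' (M : Matrix (Fin p) (Fin p) ℝ) :
    Measurable fun x : Fin p → ℝ => M.mulVec x :=
  measurable_pi_lambda _ fun i => by
    simp only [Matrix.mulVec, dotProduct]
    exact Finset.measurable_sum _ fun j _ => measurable_const.mul (measurable_pi_apply j)

lemma sq_le_one_of_sphere {x : Fin p → ℝ} (hx : ∑ i, x i ^ 2 = 1) (i : Fin p) :
    x i ^ 2 ≤ 1 :=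
  hx ▸ Finset.single_le_sum (fun j _ => sq_nonneg (x j)) (Finset.mem_univ i)

lemma integrable_comp (hu : Measurable u)
    (hsphere : ∀ᵐ ω ∂P, ∑ i, (u ω i) ^ 2 = 1)
    {f : (Fin p → ℝ) → ℝ} (hf : Measurable f) {C : ℝ}
    (hb : ∀ x : Fin p → ℝ, ∑ i, x i ^ 2 = 1 → |f x| ≤ C) :
    Integrable (fun ω => f (u ω)) P := by
  refine ⟨(hf.comp hu).aestronglyMeasurable, HasFiniteIntegral.of_bounded (C := C) ?_⟩
  filter_upwards [hsphere] with ω h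
  simpa [Real.norm_eq_abs] using hb _ h

lemma integrable_sq (hu : Measurable u)
    (hsphere : ∀ᵐ ω ∂P, ∑ i, (u ω i) ^ 2 = 1) (i : Fin p) :
    Integrable (fun ω => (u ω i) ^ 2) P := by
  refine integrable_comp hu hsphere (f := fun x => (x i) ^ 2)
    ((measurable_pi_apply i).pow measurable_const) (C := 1) ?_
  intro x hx
  rw [abs_of_nonneg (sq_nonneg _)]
  exact sq_le_one_of_sphere hx i

lemma integrable_sq_sq (hu : Measurable u)
    (hsphere : ∀ᵐ ω ∂P, ∑ i, (u ω i) ^ 2 = 1) (i j : Fin p) :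
    Integrable (fun ω => (u ω i) ^ 2 * (u ω j) ^ 2) P := by
  refine integrable_comp hu hsphere (f := fun x => (x i) ^ 2 * (x j) ^ 2)
    (((measurable_pi_apply i).pow measurable_const).mul
      ((measurable_pi_apply j).pow measurable_const)) (C := 1) ?_
  intro x hx
  rw [abs_of_nonneg (mul_nonneg (sq_nonneg _) (sq_nonneg _))]
  calc x i ^ 2 * x j ^ 2 ≤ 1 * 1 :=
        mul_le_mul (sq_le_one_of_sphere hx i) (sq_le_one_of_sphere hx j)
          (sq_nonneg _) zero_le_one
    _ = 1 := by ring

lemma rot_integral (hu : Measurable u)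
    (hrot : ∀ O : Matrix.orthogonalGroup (Fin p) ℝ,
      Measure.map (fun ω => (O : Matrix (Fin p) (Fin p) ℝ).mulVec (u ω)) P = Measure.map u P)
    (O : Matrix.orthogonalGroup (Fin p) ℝ) {f : (Fin p → ℝ) → ℝ} (hf : Measurable f) :
    ∫ ω, f ((O : Matrix (Fin p) (Fin p) ℝ).mulVec (u ω)) ∂P = ∫ ω, f (u ω) ∂P := by
  have h1 : AEMeasurable (fun ω => (O : Matrix (Fin p) (Fin p) ℝ).mulVec (u ω)) P :=
    ((measurable_mulVec' _).comp hu).aemeasurable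
  rw [← integral_map h1 hf.aestronglyMeasurable, hrot O,
    integral_map hu.aemeasurable hf.aestronglyMeasurable]

/-- Permutation matrix. -/
def permMat (σ : Equiv.Perm (Fin p)) : Matrix (Fin p) (Fin p) ℝ :=
  Matrix.of fun i j => if j = σ i then 1 else 0

lemma permMat_mulVec (σ : Equiv.Perm (Fin p)) (x : Fin p → ℝ) :
    (permMat σ).mulVec x = fun i => x (σ i) := by
  funext i
  simp [permMat, Matrix.mulVec, dotProduct]

lemma permMat_mem (σ : Equiv.Perm (Fin p)) : permMat σ ∈ Matrix.orthogonalGroup (Fin p) ℝ := by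
  rw [Matrix.mem_orthogonalGroup_iff']
  ext a b
  simp only [Matrix.mul_apply, Matrix.star_apply, star_trivial, permMat, Matrix.of_apply]
  rw [Finset.sum_eq_single (σ.symm a)]
  · simp [Matrix.one_apply, eq_comm, Equiv.eq_symm_apply]
  · intro k _ hk
    have : a ≠ σ k := fun h => hk (by simp [h])
    simp [this]
  · simp

lemma perm_integral (hu : Measurable u)
    (hrot : ∀ O : Matrix.orthogonalGroup (Fin p) ℝ,
      Measure.map (fun ω => (O : Matrix (Fin p) (Fin p) ℝ).mulVec (u ω)) P = Measure.map u P)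
    (σ : Equiv.Perm (Fin p)) {f : (Fin p → ℝ) → ℝ} (hf : Measurable f) :
    ∫ ω, f (fun i => u ω (σ i)) ∂P = ∫ ω, f (u ω) ∂P := by
  have h := rot_integral hu hrot ⟨permMat σ, permMat_mem σ⟩ hf
  simpa [permMat_mulVec] using h

noncomputable section

/-- The 2D rotation by 45 degrees in coordinates `i0, i1`. -/
def rotMat (i0 i1 : Fin p) : Matrix (Fin p) (Fin p) ℝ :=
  Matrix.of fun i j =>
    if i = i0 then (if j = i0 then (Real.sqrt 2)⁻¹ else if j = i1 then (Real.sqrt 2)⁻¹ else 0)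
    else if i = i1 then
      (if j = i0 then (Real.sqrt 2)⁻¹ else if j = i1 then -(Real.sqrt 2)⁻¹ else 0)
    else if j = i then 1 else 0

lemma sqrt2_inv_sq : ((Real.sqrt 2)⁻¹ : ℝ) * (Real.sqrt 2)⁻¹ = 1 / 2 := by
  rw [← mul_inv, Real.mul_self_sqrt (by norm_num : (0:ℝ) ≤ 2)]
  norm_num

section RotEntries

variable {i0 i1 : Fin p}

lemma rot_e00 : rotMat i0 i1 i0 i0 = (Real.sqrt 2)⁻¹ := by simp [rotMat]

lemma rot_e01 (h : i0 ≠ i1) : rotMat i0 i1 i0 i1 = (Real.sqrt 2)⁻¹ := by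
  simp [rotMat, if_neg (Ne.symm h)]

lemma rot_e10 (h : i0 ≠ i1) : rotMat i0 i1 i1 i0 = (Real.sqrt 2)⁻¹ := by
  simp [rotMat, if_neg (Ne.symm h), if_neg h]

lemma rot_e11 (h : i0 ≠ i1) : rotMat i0 i1 i1 i1 = -(Real.sqrt 2)⁻¹ := by
  simp [rotMat, if_neg (Ne.symm h), if_neg h]

lemma rot_e0b {b : Fin p} (hb0 : b ≠ i0) (hb1 : b ≠ i1) : rotMat i0 i1 i0 b = 0 := by
  simp [rotMat, if_neg hb0, if_neg hb1]

lemma rot_e1b (h : i0 ≠ i1) {b : Fin p} (hb0 : b ≠ i0) (hb1 : b ≠ i1) : rotMat i0 i1 i1 b = 0 := by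
  simp [rotMat, if_neg hb0, if_neg hb1, if_neg h]

lemma rot_ekb {k b : Fin p} (hk0 : k ≠ i0) (hk1 : k ≠ i1) :
    rotMat i0 i1 k b = if b = k then 1 else 0 := by
  simp [rotMat, if_neg hk0, if_neg hk1]

end RotEntries

lemma rotMat_mem {i0 i1 : Fin p} (h : i0 ≠ i1) :
    rotMat i0 i1 ∈ Matrix.orthogonalGroup (Fin p) ℝ := by
  have hs : ((Real.sqrt 2)⁻¹ : ℝ) * (Real.sqrt 2)⁻¹ = 1 / 2 := sqrt2_inv_sq
  rw [Matrix.mem_orthogonalGroup_iff']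
  ext a b
  simp only [Matrix.mul_apply, Matrix.star_apply, star_trivial, Matrix.transpose_apply]
  by_cases ha0 : a = i0
  · subst ha0
    have hz : ∀ k ∈ Finset.univ, k ∉ ({a, i1} : Finset (Fin p)) →
        rotMat a i1 k a * rotMat a i1 k b = 0 := by
      intro k _ hk
      simp only [Finset.mem_insert, Finset.mem_singleton, not_or] at hk
      obtain ⟨h0, h1⟩ := hk
      rw [rot_ekb h0 h1, if_neg (Ne.symm h0), zero_mul]
    rw [← Finset.sum_subset (Finset.subset_univ {a, i1}) hz, Finset.sum_pair h,
      rot_e00, rot_e10 h]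
    by_cases hb0 : b = a
    · subst hb0
      rw [rot_e00, rot_e10 h, Matrix.one_apply_eq]
      linear_combination 2 * hs
    · by_cases hb1 : b = i1
      · subst hb1
        rw [rot_e01 h, rot_e11 h, Matrix.one_apply_ne (Ne.symm hb0)]
        ring
      · rw [rot_e0b hb0 hb1, rot_e1b h hb0 hb1, Matrix.one_apply_ne (Ne.symm hb0)]
        ring
  · by_cases ha1 : a = i1
    · subst ha1
      have hz : ∀ k ∈ Finset.univ, k ∉ ({i0, a} : Finset (Fin p)) →
          rotMat i0 a k a * rotMat i0 a k b = 0 := by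
        intro k _ hk
        simp only [Finset.mem_insert, Finset.mem_singleton, not_or] at hk
        obtain ⟨h0, h1⟩ := hk
        rw [rot_ekb h0 h1, if_neg (Ne.symm h1), zero_mul]
      rw [← Finset.sum_subset (Finset.subset_univ {i0, a}) hz, Finset.sum_pair h,
        rot_e01 h, rot_e11 h]
      by_cases hb0 : b = i0
      · subst hb0
        rw [rot_e00, rot_e10 h, Matrix.one_apply_ne ha0]
        ring
      · by_cases hb1 : b = a
        · subst hb1
          rw [rot_e01 h, rot_e11 h, Matrix.one_apply_eq]
          linear_combination 2 * hs
        · rw [rot_e0b hb0 hb1, rot_e1b h hb0 hb1, Matrix.one_apply_ne (Ne.symm hb1)]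
          ring
    · rw [Finset.sum_eq_single a]
      · rw [rot_ekb ha0 ha1, rot_ekb ha0 ha1, if_pos rfl, one_mul]
        simp [Matrix.one_apply, eq_comm]
      · intro k _ hk
        by_cases hk0 : k = i0
        · subst hk0
          rw [rot_e0b ha0 ha1, zero_mul]
        · by_cases hk1 : k = i1
          · subst hk1
            rw [rot_e1b h ha0 ha1, zero_mul]
          · rw [rot_ekb hk0 hk1, if_neg (Ne.symm hk), zero_mul]
      · simp

lemma rotMat_row {i0 i1 : Fin p} (h : i0 ≠ i1) (x : Fin p → ℝ) :
    (rotMat i0 i1).mulVec x i0 = (Real.sqrt 2)⁻¹ * x i0 + (Real.sqrt 2)⁻¹ * x i1 ∧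
    (rotMat i0 i1).mulVec x i1 = (Real.sqrt 2)⁻¹ * x i0 - (Real.sqrt 2)⁻¹ * x i1 := by
  constructor
  · show (fun j => rotMat i0 i1 i0 j) ⬝ᵥ x = _
    have hz : ∀ k ∈ Finset.univ, k ∉ ({i0, i1} : Finset (Fin p)) →
        rotMat i0 i1 i0 k * x k = 0 := by
      intro k _ hk
      simp only [Finset.mem_insert, Finset.mem_singleton, not_or] at hk
      obtain ⟨h0, h1⟩ := hk
      rw [rot_e0b h0 h1, zero_mul]
    rw [dotProduct, ← Finset.sum_subset (Finset.subset_univ {i0, i1}) hz,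
      Finset.sum_pair h, rot_e00, rot_e01 h]
  · show (fun j => rotMat i0 i1 i1 j) ⬝ᵥ x = _
    have hz : ∀ k ∈ Finset.univ, k ∉ ({i0, i1} : Finset (Fin p)) →
        rotMat i0 i1 i1 k * x k = 0 := by
      intro k _ hk
      simp only [Finset.mem_insert, Finset.mem_singleton, not_or] at hk
      obtain ⟨h0, h1⟩ := hk
      rw [rot_e1b h h0 h1, zero_mul]
    rw [dotProduct, ← Finset.sum_subset (Finset.subset_univ {i0, i1}) hz,
      Finset.sum_pair h, rot_e10 h, rot_e11 h]
    ring

lemma msq_eq (hu : Measurable u)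
    (hrot : ∀ O : Matrix.orthogonalGroup (Fin p) ℝ,
      Measure.map (fun ω => (O : Matrix (Fin p) (Fin p) ℝ).mulVec (u ω)) P = Measure.map u P)
    (i j : Fin p) :
    ∫ ω, (u ω i) ^ 2 ∂P = ∫ ω, (u ω j) ^ 2 ∂P := by
  have h := perm_integral hu hrot (Equiv.swap i j) (f := fun x => (x j) ^ 2)
    ((measurable_pi_apply j).pow measurable_const)
  simpa [Equiv.swap_apply_right] using h

lemma moment2 (hp : 0 < p) (hu : Measurable u)
    (hsphere : ∀ᵐ ω ∂P, ∑ i, (u ω i) ^ 2 = 1)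
    (hrot : ∀ O : Matrix.orthogonalGroup (Fin p) ℝ,
      Measure.map (fun ω => (O : Matrix (Fin p) (Fin p) ℝ).mulVec (u ω)) P = Measure.map u P)
    (i : Fin p) :
    ∫ ω, (u ω i) ^ 2 ∂P = 1 / p := by
  have hsum : ∑ j, ∫ ω, (u ω j) ^ 2 ∂P = 1 := by
    rw [← integral_finset_sum _ (fun j _ => integrable_sq hu hsphere j)]
    have he : (fun ω => ∑ j, (u ω j) ^ 2) =ᵐ[P] fun _ => (1 : ℝ) := by
      filter_upwards [hsphere] with ω h using h
    rw [integral_congr_ae he]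
    simp
  rw [Finset.sum_congr rfl (fun j _ => msq_eq hu hrot j i), Finset.sum_const,
    Finset.card_univ, Fintype.card_fin, nsmul_eq_mul] at hsum
  have hp' : (p : ℝ) ≠ 0 := Nat.cast_ne_zero.2 hp.ne'
  rw [eq_div_iff hp', mul_comm]
  exact hsum

lemma moment22 (hp : 0 < p) (hu : Measurable u)
    (hsphere : ∀ᵐ ω ∂P, ∑ i, (u ω i) ^ 2 = 1)
    (hrot : ∀ O : Matrix.orthogonalGroup (Fin p) ℝ,
      Measure.map (fun ω => (O : Matrix (Fin p) (Fin p) ℝ).mulVec (u ω)) P = Measure.map u P)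
    (i j : Fin p) :
    ∫ ω, (u ω i) ^ 2 * (u ω j) ^ 2 ∂P = (if i = j then 3 else 1) / (p * (p + 2)) := by
  have hinv : ∀ (σ : Equiv.Perm (Fin p)) (k l : Fin p),
      ∫ ω, (u ω (σ k)) ^ 2 * (u ω (σ l)) ^ 2 ∂P = ∫ ω, (u ω k) ^ 2 * (u ω l) ^ 2 ∂P := by
    intro σ k l
    have h := perm_integral hu hrot σ (f := fun x => (x k) ^ 2 * (x l) ^ 2)
      (((measurable_pi_apply k).pow measurable_const).mul
        ((measurable_pi_apply l).pow measurable_const))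
    simpa using h
  by_cases hp2 : 2 ≤ p
  · set i0 : Fin p := ⟨0, hp⟩ with hi0
    set i1 : Fin p := ⟨1, hp2⟩ with hi1
    have h01 : i0 ≠ i1 := by simp [hi0, hi1, Fin.ext_iff]
    set m4 : ℝ := ∫ ω, (u ω i0) ^ 2 * (u ω i0) ^ 2 ∂P with hm4
    set m22 : ℝ := ∫ ω, (u ω i0) ^ 2 * (u ω i1) ^ 2 ∂P with hm22
    have hdiag : ∀ k, ∫ ω, (u ω k) ^ 2 * (u ω k) ^ 2 ∂P = m4 := by
      intro k
      have h := hinv (Equiv.swap i0 k) i0 i0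
      rw [Equiv.swap_apply_left] at h
      exact h.trans hm4.symm
    have hoff : ∀ k l, k ≠ l → ∫ ω, (u ω k) ^ 2 * (u ω l) ^ 2 ∂P = m22 := by
      intro k l hkl
      set τ : Equiv.Perm (Fin p) := Equiv.swap i0 k with hτ
      have hm : τ l ≠ i0 := by
        intro hh
        apply hkl
        have : l = τ i0 := by
          rw [← hh, hτ, Equiv.swap_apply_self]
        rw [this, hτ, Equiv.swap_apply_left]
      set σ : Equiv.Perm (Fin p) := (Equiv.swap i1 (τ l)).trans τ with hσ
      have hσ0 : σ i0 = k := by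
        rw [hσ, Equiv.trans_apply, Equiv.swap_apply_of_ne_of_ne h01 (Ne.symm hm), hτ,
          Equiv.swap_apply_left]
      have hσ1 : σ i1 = l := by
        rw [hσ, Equiv.trans_apply, Equiv.swap_apply_left, hτ, Equiv.swap_apply_self]
      have h := hinv σ i0 i1
      rw [hσ0, hσ1] at h
      exact h.trans hm22.symm
    have hsum : ∑ k, ∑ l, ∫ ω, (u ω k) ^ 2 * (u ω l) ^ 2 ∂P = 1 := by
      have h1 : ∫ ω, (∑ k, (u ω k) ^ 2) * (∑ l, (u ω l) ^ 2) ∂P = 1 := by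
        have he : (fun ω => (∑ k, (u ω k) ^ 2) * (∑ l, (u ω l) ^ 2)) =ᵐ[P]
            fun _ => (1 : ℝ) := by
          filter_upwards [hsphere] with ω h
          rw [h]; ring
        rw [integral_congr_ae he]; simp
      calc ∑ k, ∑ l, ∫ ω, (u ω k) ^ 2 * (u ω l) ^ 2 ∂P
          = ∑ k, ∫ ω, ∑ l, (u ω k) ^ 2 * (u ω l) ^ 2 ∂P := by
            refine Finset.sum_congr rfl fun k _ => ?_
            rw [integral_finset_sum _ (fun l _ => integrable_sq_sq hu hsphere k l)]
        _ = ∫ ω, ∑ k, ∑ l, (u ω k) ^ 2 * (u ω l) ^ 2 ∂P := by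
            rw [integral_finset_sum _ (fun k _ => integrable_finset_sum _
              (fun l _ => integrable_sq_sq hu hsphere k l))]
        _ = 1 := by
            rw [show (fun ω => ∑ k, ∑ l, (u ω k) ^ 2 * (u ω l) ^ 2)
                = fun ω => (∑ k, (u ω k) ^ 2) * (∑ l, (u ω l) ^ 2) from
              funext fun ω => (Finset.sum_mul_sum _ _ _ _).symm]
            exact h1
    have hrotrel : m4 = 3 * m22 := by
      have hmeas : Measurable fun x : Fin p → ℝ => ((x i0) ^ 2) ^ 2 + ((x i1) ^ 2) ^ 2 :=
        (((measurable_pi_apply i0).pow measurable_const).pow measurable_const).add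
          (((measurable_pi_apply i1).pow measurable_const).pow measurable_const)
      have hR := rot_integral hu hrot ⟨rotMat i0 i1, rotMat_mem h01⟩
        (f := fun x => ((x i0) ^ 2) ^ 2 + ((x i1) ^ 2) ^ 2) hmeas
      have hs : ((Real.sqrt 2)⁻¹ : ℝ) * (Real.sqrt 2)⁻¹ = 1 / 2 := sqrt2_inv_sq
      have hpt : (fun ω => (((rotMat i0 i1).mulVec (u ω) i0) ^ 2) ^ 2
            + (((rotMat i0 i1).mulVec (u ω) i1) ^ 2) ^ 2)
          = fun ω => (1 / 2) * ((u ω i0) ^ 2 * (u ω i0) ^ 2)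
            + (1 / 2) * ((u ω i1) ^ 2 * (u ω i1) ^ 2)
            + 3 * ((u ω i0) ^ 2 * (u ω i1) ^ 2) := by
        funext ω
        obtain ⟨h0, h1⟩ := rotMat_row h01 (u ω)
        rw [h0, h1]
        set s : ℝ := (Real.sqrt 2)⁻¹
        set a : ℝ := u ω i0
        set b : ℝ := u ω i1
        linear_combination ((s * s + 1 / 2) * (2 * a ^ 4 + 12 * a ^ 2 * b ^ 2
          + 2 * b ^ 4)) * hs
      have hpt2 : (fun ω => ((u ω i0) ^ 2) ^ 2 + ((u ω i1) ^ 2) ^ 2)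
          = fun ω => (u ω i0) ^ 2 * (u ω i0) ^ 2 + (u ω i1) ^ 2 * (u ω i1) ^ 2 :=
        funext fun ω => by ring
      have ig1 := integrable_sq_sq hu hsphere i0 i0
      have ig2 := integrable_sq_sq hu hsphere i1 i1
      have ig3 := integrable_sq_sq hu hsphere i0 i1
      simp only [hpt, hpt2] at hR
      have s1 : ∫ ω, (1 / 2 * ((u ω i0) ^ 2 * (u ω i0) ^ 2)
            + 1 / 2 * ((u ω i1) ^ 2 * (u ω i1) ^ 2)
            + 3 * ((u ω i0) ^ 2 * (u ω i1) ^ 2)) ∂P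
          = (∫ ω, (1 / 2 * ((u ω i0) ^ 2 * (u ω i0) ^ 2)
            + 1 / 2 * ((u ω i1) ^ 2 * (u ω i1) ^ 2)) ∂P)
            + ∫ ω, 3 * ((u ω i0) ^ 2 * (u ω i1) ^ 2) ∂P :=
        integral_add ((ig1.const_mul (1 / 2)).add (ig2.const_mul (1 / 2)))
          (ig3.const_mul 3)
      have s2 : ∫ ω, (1 / 2 * ((u ω i0) ^ 2 * (u ω i0) ^ 2)
            + 1 / 2 * ((u ω i1) ^ 2 * (u ω i1) ^ 2)) ∂P
          = (∫ ω, 1 / 2 * ((u ω i0) ^ 2 * (u ω i0) ^ 2) ∂P)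
            + ∫ ω, 1 / 2 * ((u ω i1) ^ 2 * (u ω i1) ^ 2) ∂P :=
        integral_add (ig1.const_mul (1 / 2)) (ig2.const_mul (1 / 2))
      have s4 : ∫ ω, ((u ω i0) ^ 2 * (u ω i0) ^ 2 + (u ω i1) ^ 2 * (u ω i1) ^ 2) ∂P
          = (∫ ω, (u ω i0) ^ 2 * (u ω i0) ^ 2 ∂P)
            + ∫ ω, (u ω i1) ^ 2 * (u ω i1) ^ 2 ∂P :=
        integral_add ig1 ig2
      rw [s1, s2, s4, integral_const_mul, integral_const_mul, integral_const_mul,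
        hdiag i1] at hR
      rw [← hm4, ← hm22] at hR
      linarith
    have hrow : ∀ k, ∑ l, ∫ ω, (u ω k) ^ 2 * (u ω l) ^ 2 ∂P
        = m4 + ((p : ℝ) - 1) * m22 := by
      intro k
      rw [← Finset.add_sum_erase _ _ (Finset.mem_univ k), hdiag k]
      congr 1
      rw [Finset.sum_congr rfl (fun l hl => hoff k l (Finset.ne_of_mem_erase hl).symm),
        Finset.sum_const, Finset.card_erase_of_mem (Finset.mem_univ k),
        Finset.card_univ, Fintype.card_fin, nsmul_eq_mul, Nat.cast_sub hp]
      simp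
    rw [Finset.sum_congr rfl (fun k _ => hrow k), Finset.sum_const, Finset.card_univ,
      Fintype.card_fin, nsmul_eq_mul] at hsum
    have hpR : (0 : ℝ) < p := Nat.cast_pos.2 hp
    have hD : (p : ℝ) * ((p : ℝ) + 2) ≠ 0 := by positivity
    have hm22v : m22 = 1 / ((p : ℝ) * ((p : ℝ) + 2)) := by
      rw [eq_div_iff hD]
      linear_combination hsum - (p : ℝ) * hrotrel
    have hm4v : m4 = 3 / ((p : ℝ) * ((p : ℝ) + 2)) := by
      rw [hrotrel, hm22v]; ring
    by_cases hij : i = j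
    · subst hij
      rw [if_pos rfl, hdiag i, hm4v]
    · rw [if_neg hij, hoff i j hij, hm22v]
  · have hp1 : p = 1 := by omega
    subst hp1
    have hij : i = j := Subsingleton.elim i j
    subst hij
    rw [if_pos rfl]
    have he : (fun ω => (u ω i) ^ 2 * (u ω i) ^ 2) =ᵐ[P] fun _ => (1 : ℝ) := by
      filter_upwards [hsphere] with ω h
      have h0 : (u ω i) ^ 2 = 1 := by
        have hi : i = 0 := Subsingleton.elim i 0
        rw [hi]
        rw [Fin.sum_univ_one] at h
        exact h
      rw [h0]; norm_num
    rw [integral_congr_ae he]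
    simp
    norm_num

lemma diag_first_moment (hp : 0 < p) (hu : Measurable u)
    (hsphere : ∀ᵐ ω ∂P, ∑ i, (u ω i) ^ 2 = 1)
    (hrot : ∀ O : Matrix.orthogonalGroup (Fin p) ℝ,
      Measure.map (fun ω => (O : Matrix (Fin p) (Fin p) ℝ).mulVec (u ω)) P = Measure.map u P)
    (lam : Fin p → ℝ) :
    ∫ ω, ∑ i, lam i * (u ω i) ^ 2 ∂P = (∑ i, lam i) / p := by
  rw [integral_finset_sum _ (fun i _ => (integrable_sq hu hsphere i).const_mul (lam i)),
    Finset.sum_congr rfl (fun i _ => by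
      rw [integral_const_mul, moment2 hp hu hsphere hrot i]),
    Finset.sum_div]
  exact Finset.sum_congr rfl fun i _ => mul_one_div _ _

lemma diag_second_moment (hp : 0 < p) (hu : Measurable u)
    (hsphere : ∀ᵐ ω ∂P, ∑ i, (u ω i) ^ 2 = 1)
    (hrot : ∀ O : Matrix.orthogonalGroup (Fin p) ℝ,
      Measure.map (fun ω => (O : Matrix (Fin p) (Fin p) ℝ).mulVec (u ω)) P = Measure.map u P)
    (lam : Fin p → ℝ) :
    ∫ ω, (∑ i, lam i * (u ω i) ^ 2) ^ 2 ∂P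
      = (2 * ∑ i, (lam i) ^ 2 + (∑ i, lam i) ^ 2) / (p * (p + 2)) := by
  have hpt : (fun ω => (∑ i, lam i * (u ω i) ^ 2) ^ 2)
      = fun ω => ∑ k, ∑ l, (lam k * lam l) * ((u ω k) ^ 2 * (u ω l) ^ 2) := by
    funext ω
    rw [sq, Finset.sum_mul_sum]
    exact Finset.sum_congr rfl fun k _ => Finset.sum_congr rfl fun l _ => by ring
  rw [hpt,
    integral_finset_sum _ (fun k _ => integrable_finset_sum _
      (fun l _ => (integrable_sq_sq hu hsphere k l).const_mul _)),
    Finset.sum_congr rfl (fun k _ => integral_finset_sum _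
      (fun l _ => (integrable_sq_sq hu hsphere k l).const_mul _)),
    Finset.sum_congr rfl (fun k _ => Finset.sum_congr rfl (fun l _ => by
      rw [integral_const_mul, moment22 hp hu hsphere hrot k l]))]
  have hstep : ∀ k l : Fin p, lam k * lam l * ((if k = l then (3 : ℝ) else 1)
        / ((p : ℝ) * ((p : ℝ) + 2)))
      = (lam k * lam l + if k = l then 2 * (lam k * lam l) else 0)
        / ((p : ℝ) * ((p : ℝ) + 2)) := by
    intro k l
    by_cases h : k = l
    · simp only [if_pos h]; ring
    · simp only [if_neg h]; ring
  rw [Finset.sum_congr rfl fun k _ => Finset.sum_congr rfl fun l _ => hstep k l]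
  rw [Finset.sum_congr rfl fun k _ => (Finset.sum_div _ _ _).symm, ← Finset.sum_div]
  congr 1
  have e : ∀ k, ∑ l, (lam k * lam l + if k = l then 2 * (lam k * lam l) else 0)
      = lam k * ∑ l, lam l + 2 * (lam k) ^ 2 := by
    intro k
    rw [Finset.sum_add_distrib, ← Finset.mul_sum]
    congr 1
    rw [Finset.sum_ite_eq _ k (fun l => 2 * (lam k * lam l))]
    simp [sq]
  rw [Finset.sum_congr rfl fun k _ => e k, Finset.sum_add_distrib, ← Finset.sum_mul,
    ← Finset.mul_sum]
  ring

lemma mulVec_sumsq {M : Matrix (Fin p) (Fin p) ℝ}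
    (hM : M ∈ Matrix.orthogonalGroup (Fin p) ℝ) (x : Fin p → ℝ) :
    ∑ i, (M.mulVec x i) ^ 2 = ∑ i, x i ^ 2 := by
  have h1 : ∀ y : Fin p → ℝ, ∑ i, y i ^ 2 = y ⬝ᵥ y := fun y => by
    simp [dotProduct, sq]
  rw [h1, h1, dotProduct_mulVec, Matrix.vecMul_mulVec]
  have ht : Mᵀ * M = 1 := by
    have := (Matrix.mem_orthogonalGroup_iff' (Fin p) ℝ).mp hM
    exact this
  rw [ht, Matrix.vecMul_one]

end

end SphereMomentsAux

open SphereMomentsAux in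
/-- **Lemma 11 (second moment and variance).** If `u` is a random vector uniformly distributed
on the unit sphere `S^{p-1}` (i.e. `u` takes values in the unit sphere and its law is invariant
under every orthogonal transformation, which characterizes the uniform distribution on the
sphere), then for any fixed `p × p` real symmetric matrix `A`,
`E[(uᵀ A u)²] = (2‖A‖_F² + (tr A)²) / (p (p + 2))` and
`Var(uᵀ A u) = 2 (p ‖A‖_F² - (tr A)²) / (p² (p + 2))`. -/
theorem second_moment_quadratic_form_uniform_sphere {p : ℕ} (hp : 0 < p)
    {Ω : Type*} [MeasurableSpace Ω] (P : Measure Ω) [IsProbabilityMeasure P]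
    (u : Ω → Fin p → ℝ) (hu : Measurable u)
    (hsphere : ∀ᵐ ω ∂P, ∑ i, (u ω i) ^ 2 = 1)
    (hrot : ∀ O : Matrix.orthogonalGroup (Fin p) ℝ,
      Measure.map (fun ω => (O : Matrix (Fin p) (Fin p) ℝ).mulVec (u ω)) P
        = Measure.map u P)
    (A : Matrix (Fin p) (Fin p) ℝ) (hA : A.IsSymm) :
    (∫ ω, ((u ω) ⬝ᵥ A.mulVec (u ω)) ^ 2 ∂P
        = (2 * ∑ i, ∑ j, (A i j) ^ 2 + A.trace ^ 2) / (p * (p + 2)))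
    ∧ (∫ ω, ((u ω) ⬝ᵥ A.mulVec (u ω)) ^ 2 ∂P
          - (∫ ω, (u ω) ⬝ᵥ A.mulVec (u ω) ∂P) ^ 2
        = 2 * ((p : ℝ) * ∑ i, ∑ j, (A i j) ^ 2 - A.trace ^ 2) / (p ^ 2 * (p + 2))) := by
  classical
  have hA' : A.IsHermitian := by
    show Aᴴ = A
    rw [Matrix.conjTranspose_eq_transpose_of_trivial]
    exact hA
  set U := hA'.eigenvectorUnitary with hU
  set lam : Fin p → ℝ := hA'.eigenvalues with hlam
  set M : Matrix (Fin p) (Fin p) ℝ := (U : Matrix (Fin p) (Fin p) ℝ) with hM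
  have hspec : A = M * Matrix.diagonal lam * star M := by
    have h := hA'.spectral_theorem
    rwa [RCLike.ofReal_real_eq_id, Function.id_comp] at h
  have hsm : star M * M = 1 := Unitary.star_mul_self_of_mem U.2
  -- quadratic form identity
  have hquad : ∀ x : Fin p → ℝ,
      x ⬝ᵥ A.mulVec x = ∑ i, lam i * ((star M).mulVec x i) ^ 2 := by
    intro x
    conv_lhs => rw [hspec]
    rw [← Matrix.mulVec_mulVec, ← Matrix.mulVec_mulVec, dotProduct_mulVec]
    have hvm : x ᵥ* M = (star M).mulVec x := by
      rw [Matrix.star_eq_conjTranspose, Matrix.conjTranspose_eq_transpose_of_trivial,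
        Matrix.mulVec_transpose]
    rw [hvm]
    simp only [dotProduct, Matrix.mulVec_diagonal]
    exact Finset.sum_congr rfl fun i _ => by ring
  -- the rotated vector
  have hOmem : star M ∈ Matrix.orthogonalGroup (Fin p) ℝ := Unitary.star_mem U.2
  set v : Ω → Fin p → ℝ := fun ω => (star M).mulVec (u ω) with hv
  have hvmeas : Measurable v := (measurable_mulVec' (star M)).comp hu
  have hsphere_v : ∀ᵐ ω ∂P, ∑ i, (v ω i) ^ 2 = 1 := by
    filter_upwards [hsphere] with ω h
    rw [hv]
    rw [mulVec_sumsq hOmem (u ω)]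
    exact h
  have hrot_v : ∀ O : Matrix.orthogonalGroup (Fin p) ℝ,
      Measure.map (fun ω => (O : Matrix (Fin p) (Fin p) ℝ).mulVec (v ω)) P
        = Measure.map v P := by
    intro Q
    have h1 : (fun ω => (Q : Matrix (Fin p) (Fin p) ℝ).mulVec (v ω))
        = fun ω => ((Q : Matrix (Fin p) (Fin p) ℝ) * star M).mulVec (u ω) :=
      funext fun ω => Matrix.mulVec_mulVec _ _ _
    rw [h1, hrot ⟨(Q : Matrix (Fin p) (Fin p) ℝ) * star M, mul_mem Q.2 hOmem⟩]
    exact (hrot ⟨star M, hOmem⟩).symm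
  -- rewrite the integrands
  have hg1 : (fun ω => ((u ω) ⬝ᵥ A.mulVec (u ω)) ^ 2)
      = fun ω => (∑ i, lam i * (v ω i) ^ 2) ^ 2 :=
    funext fun ω => by rw [hquad (u ω)]
  have hg2 : (fun ω => (u ω) ⬝ᵥ A.mulVec (u ω))
      = fun ω => ∑ i, lam i * (v ω i) ^ 2 :=
    funext fun ω => by rw [hquad (u ω)]
  -- trace identities
  have htr : A.trace = ∑ i, lam i := by
    conv_lhs => rw [hspec]
    rw [Matrix.trace_mul_comm, ← Matrix.mul_assoc, hsm, one_mul, Matrix.trace_diagonal]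
  have hAA : A * A = M * (Matrix.diagonal lam * Matrix.diagonal lam) * star M := by
    conv_lhs => rw [hspec]
    simp only [Matrix.mul_assoc]
    rw [← Matrix.mul_assoc (star M) M, hsm, one_mul]
  have hF : ∑ i, ∑ j, (A i j) ^ 2 = ∑ i, (lam i) ^ 2 := by
    have h1 : ∑ i, ∑ j, (A i j) ^ 2 = (A * A).trace := by
      rw [Matrix.trace]
      refine (Finset.sum_congr rfl fun i _ => ?_).symm
      rw [Matrix.diag_apply, Matrix.mul_apply]
      exact Finset.sum_congr rfl fun j _ => by rw [hA.apply i j, sq]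
    rw [h1, hAA, Matrix.trace_mul_comm, ← Matrix.mul_assoc, hsm, one_mul,
      Matrix.diagonal_mul_diagonal, Matrix.trace_diagonal]
    exact Finset.sum_congr rfl fun i _ => (sq _).symm
  have hsecond : ∫ ω, ((u ω) ⬝ᵥ A.mulVec (u ω)) ^ 2 ∂P
      = (2 * ∑ i, ∑ j, (A i j) ^ 2 + A.trace ^ 2) / (p * (p + 2)) := by
    rw [hg1, diag_second_moment hp hvmeas hsphere_v hrot_v lam, hF, htr]
  have hfirst : ∫ ω, (u ω) ⬝ᵥ A.mulVec (u ω) ∂P = (∑ i, lam i) / p := by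
    rw [hg2]
    exact diag_first_moment hp hvmeas hsphere_v hrot_v lam
  refine ⟨hsecond, ?_⟩
  rw [hsecond, hfirst, hF, htr]
  have hpR : (0 : ℝ) < p := Nat.cast_pos.2 hp
  field_simp
  ring
end
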